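/- Let $V_0 = \mathbb{C}^n$, $V_1 = \mathbb{C}^m$, $r \ge s \ge 0$, $\delta = \max(m-n+r-s,0)$, and let $(f,g)$ be a point of $Z$, i.e., $f\colon V_0 \to V_1$ with $\mathrm{rank}(f) \le m-\delta$ and $g\colon V_1 \to V_0$ arbitrary. Then there exist bases of $V_0$ and $V_1$ in which the matrices of $f$ and $g$ have block forms $\begin{pmatrix} 0 & * \\ 0 & A \end{pmatrix}$ and $\begin{pmatrix} * & * \\ 0 & B \end{pmatrix}$ respectively, where $A$ and $B$ are upper-triangular square matrices of size $m - \delta$. -/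

import Mathlib

open Module Submodule

namespace Stmt15Aux

variable {X Y : Type} [AddCommGroup X] [Module ℂ X] [AddCommGroup Y] [Module ℂ Y]

lemma exists_pair [FiniteDimensional ℂ X] [FiniteDimensional ℂ Y]
    (hX : 0 < finrank ℂ X) (hY : 0 < finrank ℂ Y)
    (f : X →ₗ[ℂ] Y) (g : Y →ₗ[ℂ] X) :
    ∃ (ψ : Module.Dual ℂ X) (φ : Module.Dual ℂ Y), ψ ≠ 0 ∧ φ ≠ 0 ∧
      (∃ a : ℂ, f.dualMap φ = a • ψ) ∧ (∃ b : ℂ, g.dualMap ψ = b • φ) := by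
  have hXd : 0 < finrank ℂ (Module.Dual ℂ X) := by rwa [Subspace.dual_finrank_eq]
  have hYd : 0 < finrank ℂ (Module.Dual ℂ Y) := by rwa [Subspace.dual_finrank_eq]
  haveI : Nontrivial (Module.Dual ℂ X) := Module.nontrivial_of_finrank_pos hXd
  haveI : Nontrivial (Module.Dual ℂ Y) := Module.nontrivial_of_finrank_pos hYd
  obtain ⟨μ, hμ⟩ := Module.End.exists_eigenvalue (f.dualMap ∘ₗ g.dualMap)
  obtain ⟨ψ, hψ⟩ := hμ.exists_hasEigenvector
  obtain ⟨ν, hν⟩ := Module.End.exists_eigenvalue (g.dualMap ∘ₗ f.dualMap)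
  obtain ⟨φ, hφ⟩ := hν.exists_hasEigenvector
  by_cases hgψ : g.dualMap ψ = 0
  · by_cases hfφ : f.dualMap φ = 0
    · exact ⟨ψ, φ, hψ.2, hφ.2, ⟨0, by simp [hfφ]⟩, ⟨0, by simp [hgψ]⟩⟩
    · refine ⟨f.dualMap φ, φ, hfφ, hφ.2, ⟨1, by simp⟩, ⟨ν, ?_⟩⟩
      have := hφ.apply_eq_smul
      simpa using this
  · refine ⟨ψ, g.dualMap ψ, hψ.2, hgψ, ⟨μ, ?_⟩, ⟨1, by simp⟩⟩
    have := hψ.apply_eq_smul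
    simpa using this

end Stmt15Aux

namespace Stmt15Aux

lemma core (c : ℕ) :
    ∀ (X Y : Type) [AddCommGroup X] [Module ℂ X] [AddCommGroup Y] [Module ℂ Y]
      [FiniteDimensional ℂ X] [FiniteDimensional ℂ Y],
      finrank ℂ X = c → finrank ℂ Y = c →
      ∀ (f : X →ₗ[ℂ] Y) (g : Y →ₗ[ℂ] X),
      ∃ (u : Basis (Fin c) ℂ X) (v : Basis (Fin c) ℂ Y),
        (∀ j : Fin c, f (u j) ∈ span ℂ (⇑v '' {i | j ≤ i})) ∧
        (∀ j : Fin c, g (v j) ∈ span ℂ (⇑u '' {i | j ≤ i})) := by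
  induction c with
  | zero =>
    intro X Y _ _ _ _ _ _ hX hY f g
    haveI : Subsingleton X := finrank_zero_iff.mp hX
    haveI : Subsingleton Y := finrank_zero_iff.mp hY
    exact ⟨Basis.empty X, Basis.empty Y, fun j => j.elim0, fun j => j.elim0⟩
  | succ c ih =>
    intro X Y _ _ _ _ _ _ hX hY f g
    obtain ⟨ψ, φ, hψ0, hφ0, ⟨a, ha⟩, ⟨b, hb⟩⟩ :=
      exists_pair (by omega : 0 < finrank ℂ X) (by omega : 0 < finrank ℂ Y) f g
    obtain ⟨x₀, hx₀'⟩ := DFunLike.ne_iff.mp hψ0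
    have hx₀ : ψ x₀ ≠ 0 := by simpa using hx₀'
    obtain ⟨y₀, hy₀'⟩ := DFunLike.ne_iff.mp hφ0
    have hy₀ : φ y₀ ≠ 0 := by simpa using hy₀'
    have hfmap : ∀ x ∈ LinearMap.ker ψ, f x ∈ LinearMap.ker φ := by
      intro x hx
      have h1 : φ (f x) = a * ψ x := by
        have := congrArg (fun h => h x) ha
        simpa using this
      simp only [LinearMap.mem_ker] at hx ⊢
      rw [h1, hx, mul_zero]
    have hgmap : ∀ y ∈ LinearMap.ker φ, g y ∈ LinearMap.ker ψ := by
      intro y hy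
      have h1 : ψ (g y) = b * φ y := by
        have := congrArg (fun h => h y) hb
        simpa using this
      simp only [LinearMap.mem_ker] at hy ⊢
      rw [h1, hy, mul_zero]
    have hrψ : finrank ℂ (LinearMap.ker ψ) = c := by
      have h1 := LinearMap.finrank_range_add_finrank_ker ψ
      have h2 : LinearMap.range ψ = ⊤ := by
        apply LinearMap.range_eq_top.mpr
        intro y
        refine ⟨(y / ψ x₀) • x₀, ?_⟩
        simp only [map_smul, smul_eq_mul]
        field_simp
      rw [h2, finrank_top, finrank_self, hX] at h1
      omega
    have hrφ : finrank ℂ (LinearMap.ker φ) = c := by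
      have h1 := LinearMap.finrank_range_add_finrank_ker φ
      have h2 : LinearMap.range φ = ⊤ := by
        apply LinearMap.range_eq_top.mpr
        intro z
        refine ⟨(z / φ y₀) • y₀, ?_⟩
        simp only [map_smul, smul_eq_mul]
        field_simp
      rw [h2, finrank_top, finrank_self, hY] at h1
      omega
    obtain ⟨u', v', hu', hv'⟩ := ih (LinearMap.ker ψ) (LinearMap.ker φ) hrψ hrφ
      (f.restrict hfmap) (g.restrict hgmap)
    have hliX : ∀ (t : ℂ), ∀ x ∈ LinearMap.ker ψ, t • x₀ + x = 0 → t = 0 := by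
      intro t x hx h
      have := congrArg ψ h
      simp only [LinearMap.mem_ker] at hx
      simp only [map_add, map_smul, smul_eq_mul, hx, add_zero, map_zero] at this
      exact (mul_eq_zero.mp this).resolve_right hx₀
    have hspX : ∀ z : X, ∃ t : ℂ, z + t • x₀ ∈ LinearMap.ker ψ := by
      intro z
      refine ⟨-ψ z / ψ x₀, ?_⟩
      simp only [LinearMap.mem_ker, map_add, map_smul, smul_eq_mul]
      field_simp
      ring
    have hliY : ∀ (t : ℂ), ∀ y ∈ LinearMap.ker φ, t • y₀ + y = 0 → t = 0 := by
      intro t y hy h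
      have := congrArg φ h
      simp only [LinearMap.mem_ker] at hy
      simp only [map_add, map_smul, smul_eq_mul, hy, add_zero, map_zero] at this
      exact (mul_eq_zero.mp this).resolve_right hy₀
    have hspY : ∀ z : Y, ∃ t : ℂ, z + t • y₀ ∈ LinearMap.ker φ := by
      intro z
      refine ⟨-φ z / φ y₀, ?_⟩
      simp only [LinearMap.mem_ker, map_add, map_smul, smul_eq_mul]
      field_simp
      ring
    refine ⟨Basis.mkFinCons x₀ u' hliX hspX, Basis.mkFinCons y₀ v' hliY hspY, ?_, ?_⟩
    · intro j
      simp only [Basis.coe_mkFinCons]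
      induction j using Fin.cases with
      | zero =>
        rw [Fin.cons_zero]
        have hU : {i : Fin (c+1) | 0 ≤ i} = Set.univ := by
          ext i; simp [Fin.zero_le]
        rw [hU, Set.image_univ, ← Basis.coe_mkFinCons y₀ v' hliY hspY, Basis.span_eq]
        trivial
      | succ k =>
        rw [Fin.cons_succ]
        have hmem := hu' k
        have h2 : f ((u' k : X)) ∈ Submodule.map (LinearMap.ker φ).subtype
            (span ℂ (⇑v' '' {i | k ≤ i})) := by
          have heq : f ((u' k : X)) = ((f.restrict hfmap) (u' k) : Y) := rfl
          rw [heq]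
          exact Submodule.mem_map_of_mem hmem
        rw [Submodule.map_span] at h2
        simp only [Function.comp_apply]
        refine Submodule.span_mono ?_ h2
        rw [← Set.image_comp]
        intro z hz
        obtain ⟨i, hi, rfl⟩ := hz
        refine ⟨i.succ, ?_, by simp⟩
        simpa using Fin.succ_le_succ_iff.mpr hi
    · intro j
      simp only [Basis.coe_mkFinCons]
      induction j using Fin.cases with
      | zero =>
        rw [Fin.cons_zero]
        have hU : {i : Fin (c+1) | 0 ≤ i} = Set.univ := by
          ext i; simp [Fin.zero_le]
        rw [hU, Set.image_univ, ← Basis.coe_mkFinCons x₀ u' hliX hspX, Basis.span_eq]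
        trivial
      | succ k =>
        rw [Fin.cons_succ]
        have hmem := hv' k
        have h2 : g ((v' k : Y)) ∈ Submodule.map (LinearMap.ker ψ).subtype
            (span ℂ (⇑u' '' {i | k ≤ i})) := by
          have heq : g ((v' k : Y)) = ((g.restrict hgmap) (v' k) : X) := rfl
          rw [heq]
          exact Submodule.mem_map_of_mem hmem
        rw [Submodule.map_span] at h2
        simp only [Function.comp_apply]
        refine Submodule.span_mono ?_ h2
        rw [← Set.image_comp]
        intro z hz
        obtain ⟨i, hi, rfl⟩ := hz
        refine ⟨i.succ, ?_, by simp⟩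
        simpa using Fin.succ_le_succ_iff.mpr hi

end Stmt15Aux
namespace Stmt15Aux

lemma core' (c : ℕ) (X Y : Type) [AddCommGroup X] [Module ℂ X] [AddCommGroup Y] [Module ℂ Y]
    [FiniteDimensional ℂ X] [FiniteDimensional ℂ Y]
    (hX : finrank ℂ X = c) (hY : finrank ℂ Y = c)
    (f : X →ₗ[ℂ] Y) (g : Y →ₗ[ℂ] X) :
    ∃ (u : Basis (Fin c) ℂ X) (v : Basis (Fin c) ℂ Y),
      (∀ j : Fin c, f (u j) ∈ span ℂ (⇑v '' {i | i ≤ j})) ∧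
      (∀ j : Fin c, g (v j) ∈ span ℂ (⇑u '' {i | i ≤ j})) := by
  obtain ⟨u, v, hu, hv⟩ := core c X Y hX hY f g
  have hset : ∀ (j : Fin c) (w : Basis (Fin c) ℂ Y),
      True := fun _ _ => trivial
  refine ⟨u.reindex (Fin.revPerm), v.reindex (Fin.revPerm), ?_, ?_⟩
  · intro j
    have h1 : (u.reindex (Fin.revPerm)) j = u j.rev := by
      simp [Basis.reindex_apply, Fin.revPerm]
    rw [h1]
    have h2 := hu j.rev
    have hEq : ⇑(v.reindex (Fin.revPerm)) '' {i | i ≤ j} = ⇑v '' {i | j.rev ≤ i} := by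
      ext z
      constructor
      · rintro ⟨i, hi, rfl⟩
        refine ⟨i.rev, ?_, by simp [Basis.reindex_apply, Fin.revPerm]⟩
        simpa using Fin.rev_le_rev.mpr hi
      · rintro ⟨i, hi, rfl⟩
        refine ⟨i.rev, ?_, by simp [Basis.reindex_apply, Fin.revPerm]⟩
        simp only [Set.mem_setOf_eq] at hi ⊢
        rw [← Fin.rev_le_rev, Fin.rev_rev]
        exact hi
    rw [hEq]
    exact h2
  · intro j
    have h1 : (v.reindex (Fin.revPerm)) j = v j.rev := by
      simp [Basis.reindex_apply, Fin.revPerm]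
    rw [h1]
    have h2 := hv j.rev
    have hEq : ⇑(u.reindex (Fin.revPerm)) '' {i | i ≤ j} = ⇑u '' {i | j.rev ≤ i} := by
      ext z
      constructor
      · rintro ⟨i, hi, rfl⟩
        refine ⟨i.rev, ?_, by simp [Basis.reindex_apply, Fin.revPerm]⟩
        simpa using Fin.rev_le_rev.mpr hi
      · rintro ⟨i, hi, rfl⟩
        refine ⟨i.rev, ?_, by simp [Basis.reindex_apply, Fin.revPerm]⟩
        simp only [Set.mem_setOf_eq] at hi ⊢
        rw [← Fin.rev_le_rev, Fin.rev_rev]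
        exact hi
    rw [hEq]
    exact h2

lemma grow {V : Type} [AddCommGroup V] [Module ℂ V] [FiniteDimensional ℂ V]
    (k : ℕ) : ∀ (A B : Submodule ℂ V), A ≤ B → finrank ℂ A ≤ k → k ≤ finrank ℂ B →
    ∃ C : Submodule ℂ V, A ≤ C ∧ C ≤ B ∧ finrank ℂ C = k := by
  induction k with
  | zero =>
    intro A B hAB h1 h2
    refine ⟨A, le_rfl, hAB, by omega⟩
  | succ k ih =>
    intro A B hAB h1 h2
    by_cases hA : finrank ℂ A = k + 1
    · exact ⟨A, le_rfl, hAB, hA⟩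
    obtain ⟨C, hAC, hCB, hC⟩ := ih A B hAB (by omega) (by omega)
    have hCne : C ≠ B := by
      intro h; rw [h] at hC; omega
    obtain ⟨x, hxB, hxC⟩ := SetLike.exists_of_lt (lt_of_le_of_ne hCB hCne)
    have hx0 : x ≠ 0 := by rintro rfl; exact hxC C.zero_mem
    refine ⟨C ⊔ span ℂ {x}, le_trans hAC le_sup_left, sup_le hCB ?_, ?_⟩
    · rwa [Submodule.span_singleton_le_iff_mem]
    · have hinf : C ⊓ span ℂ {x} = ⊥ := by
        rw [eq_bot_iff]
        rintro y ⟨hyC, hyx⟩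
        obtain ⟨t, rfl⟩ := Submodule.mem_span_singleton.mp hyx
        rcases eq_or_ne t 0 with rfl | ht
        · simp
        · exfalso
          have := C.smul_mem t⁻¹ hyC
          rw [smul_smul, inv_mul_cancel₀ ht, one_smul] at this
          exact hxC this
      have := Submodule.finrank_sup_add_finrank_inf_eq C (span ℂ {x})
      rw [hinf, finrank_bot, finrank_span_singleton hx0] at this
      omega

end Stmt15Aux

set_option maxHeartbeats 2000000 in
set_option synthInstance.maxHeartbeats 400000 in
open Stmt15Aux in
/-- Let `V₀ = ℂ^n`, `V₁ = ℂ^m`, `r ≥ s ≥ 0`, `δ = max(m-n+r-s,0)`, and let `(f,g)` be a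
point of `Z`, i.e. `f : V₀ → V₁` of rank at most `m - δ` and `g : V₁ → V₀` arbitrary.
Then there exist bases of `V₀` and `V₁` (i.e. invertible matrices `P`, `Q`) in which the
matrices of `f` and `g` take the block forms `[[0, *], [0, A]]` and `[[*, *], [0, B]]`
respectively, with `A`, `B` upper-triangular square blocks of size `m - δ` (the column
split of `f`, resp. row split of `g`, being `n = w + (m - δ)` with `w = n - (m - δ)`, and
the row split of `f`, resp. column split of `g`, being `m = δ + (m - δ)`). -/
theorem stmt15 (n m r s δ c w : ℕ) (hrs : s ≤ r)
    (hδ : δ = m + r - (n + s)) (hc : c = m - δ) (hw : w = n - c)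
    (f : Matrix (Fin m) (Fin n) ℂ) (g : Matrix (Fin n) (Fin m) ℂ)
    (hf : f.rank ≤ m - δ) :
    ∃ (P : GL (Fin n) ℂ) (Q : GL (Fin m) ℂ),
      (∀ (i : Fin m) (j : Fin n), (j : ℕ) < w →
        ((Q : Matrix (Fin m) (Fin m) ℂ) * f * ((P⁻¹ : GL (Fin n) ℂ) : Matrix (Fin n) (Fin n) ℂ)) i j = 0) ∧
      (∀ (i : Fin m) (j : Fin n), δ ≤ (i : ℕ) → w ≤ (j : ℕ) → (j : ℕ) - w < (i : ℕ) - δ →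
        ((Q : Matrix (Fin m) (Fin m) ℂ) * f * ((P⁻¹ : GL (Fin n) ℂ) : Matrix (Fin n) (Fin n) ℂ)) i j = 0) ∧
      (∀ (i : Fin n) (j : Fin m), w ≤ (i : ℕ) → (j : ℕ) < δ →
        ((P : Matrix (Fin n) (Fin n) ℂ) * g * ((Q⁻¹ : GL (Fin m) ℂ) : Matrix (Fin m) (Fin m) ℂ)) i j = 0) ∧
      (∀ (i : Fin n) (j : Fin m), w ≤ (i : ℕ) → δ ≤ (j : ℕ) → (j : ℕ) - δ < (i : ℕ) - w →
        ((P : Matrix (Fin n) (Fin n) ℂ) * g * ((Q⁻¹ : GL (Fin m) ℂ) : Matrix (Fin m) (Fin m) ℂ)) i j = 0) := by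
  classical
  -- numeric facts
  have hcm : c ≤ m := by omega
  have hcn : c ≤ n := by omega
  have hwc : w + c = n := by omega
  set δ' : ℕ := m - c with hδ'def
  have hδc : δ' + c = m := by omega
  -- linear maps
  set std₀ := Pi.basisFun ℂ (Fin n) with hstd₀
  set std₁ := Pi.basisFun ℂ (Fin m) with hstd₁
  set F : (Fin n → ℂ) →ₗ[ℂ] (Fin m → ℂ) := Matrix.toLin std₀ std₁ f with hF
  set G : (Fin m → ℂ) →ₗ[ℂ] (Fin n → ℂ) := Matrix.toLin std₁ std₀ g with hG
  have hnn : finrank ℂ (Fin n → ℂ) = n := Module.finrank_fin_fun ℂ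
  have hmm : finrank ℂ (Fin m → ℂ) = m := Module.finrank_fin_fun ℂ
  have hrankF : finrank ℂ (LinearMap.range F) ≤ c := by
    rw [hF, ← Matrix.rank_eq_finrank_range_toLin f std₁ std₀]
    omega
  have hkF : w ≤ finrank ℂ (LinearMap.ker F) := by
    have h1 := LinearMap.finrank_range_add_finrank_ker F
    rw [hnn] at h1
    omega
  have hGE : LinearMap.ker G ≤ LinearMap.ker (F ∘ₗ G) := by
    intro y hy
    simp only [LinearMap.mem_ker] at hy ⊢
    rw [LinearMap.comp_apply, hy, map_zero]
  have hkE : δ' ≤ finrank ℂ (LinearMap.ker (F ∘ₗ G)) := by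
    have h1 := LinearMap.finrank_range_add_finrank_ker (F ∘ₗ G)
    have h2 : finrank ℂ (LinearMap.range (F ∘ₗ G)) ≤ finrank ℂ (LinearMap.range F) :=
      Submodule.finrank_mono (LinearMap.range_comp_le_range G F)
    rw [hmm] at h1
    omega
  have hkG := LinearMap.finrank_range_add_finrank_ker G
  rw [hmm] at hkG
  have hrG : finrank ℂ (LinearMap.range G) ≤ n := by
    have := Submodule.finrank_le (LinearMap.range G)
    omega
  -- construct W₀
  obtain ⟨Wg, -, hWgG, hWgrk⟩ := grow (min δ' (finrank ℂ (LinearMap.ker G))) ⊥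
    (LinearMap.ker G) bot_le (by simp) (min_le_right _ _)
  obtain ⟨W₀, hWgW₀, hW₀E, hW₀rk⟩ := grow δ' Wg (LinearMap.ker (F ∘ₗ G))
    (le_trans hWgG hGE) (by rw [hWgrk]; exact min_le_left _ _) hkE
  -- bound dim of G(W₀)
  have hmapG : finrank ℂ (Submodule.map G W₀) ≤ w := by
    have h1 := LinearMap.finrank_range_add_finrank_ker (G.domRestrict W₀)
    have h2 : LinearMap.range (G.domRestrict W₀) = Submodule.map G W₀ :=
      LinearMap.range_domRestrict _ _
    have hle : Submodule.comap W₀.subtype Wg ≤ LinearMap.ker (G.domRestrict W₀) := by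
      intro x hx
      simp only [Submodule.mem_comap] at hx
      simp only [LinearMap.mem_ker, LinearMap.domRestrict_apply]
      exact hWgG hx
    have h3 : finrank ℂ (Submodule.comap W₀.subtype Wg)
        ≤ finrank ℂ (LinearMap.ker (G.domRestrict W₀)) := Submodule.finrank_mono hle
    have h4 : finrank ℂ (Submodule.comap W₀.subtype Wg) = finrank ℂ Wg :=
      (Submodule.comapSubtypeEquivOfLe hWgW₀).finrank_eq
    rw [h2] at h1
    have h5 : finrank ℂ W₀ = δ' := hW₀rk
    rw [h5] at h1
    omega
  -- construct U₀
  have hmapKF : Submodule.map G W₀ ≤ LinearMap.ker F := by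
    rintro x ⟨y, hy, rfl⟩
    simp only [LinearMap.mem_ker]
    have : (F ∘ₗ G) y = 0 := hW₀E hy
    simpa using this
  obtain ⟨U₀, hGU₀, hU₀K, hU₀rk⟩ := grow w (Submodule.map G W₀) (LinearMap.ker F)
    hmapKF hmapG hkF
  -- quotient spaces
  have hXrk : finrank ℂ ((Fin n → ℂ) ⧸ U₀) = c := by
    have := Submodule.finrank_quotient_add_finrank U₀
    rw [hnn, hU₀rk] at this
    omega
  have hYrk : finrank ℂ ((Fin m → ℂ) ⧸ W₀) = c := by
    have := Submodule.finrank_quotient_add_finrank W₀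
    rw [hmm, hW₀rk] at this
    omega
  have hFU : U₀ ≤ Submodule.comap F W₀ := by
    intro x hx
    have hx0 : F x = 0 := hU₀K hx
    simp [Submodule.mem_comap, hx0]
  have hGW : W₀ ≤ Submodule.comap G U₀ := by
    intro y hy
    exact hGU₀ (Submodule.mem_map_of_mem hy)
  obtain ⟨ubar, vbar, hubar, hvbar⟩ := core' c ((Fin n → ℂ) ⧸ U₀) ((Fin m → ℂ) ⧸ W₀)
    hXrk hYrk (Submodule.mapQ U₀ W₀ F hFU) (Submodule.mapQ W₀ U₀ G hGW)
  -- complements and bases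
  obtain ⟨U₁, hU₁⟩ := Submodule.exists_isCompl U₀
  obtain ⟨W₁, hW₁⟩ := Submodule.exists_isCompl W₀
  set eX := Submodule.quotientEquivOfIsCompl U₀ U₁ hU₁ with heX
  set eY := Submodule.quotientEquivOfIsCompl W₀ W₁ hW₁ with heY
  set u₀ : Basis (Fin w) ℂ U₀ := Module.finBasisOfFinrankEq ℂ U₀ hU₀rk with hu₀
  set v₀ : Basis (Fin δ') ℂ W₀ := Module.finBasisOfFinrankEq ℂ W₀ hW₀rk with hv₀
  set eIdx₀ : Fin w ⊕ Fin c ≃ Fin n := finSumFinEquiv.trans (finCongr hwc) with heIdx₀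
  set eIdx₁ : Fin δ' ⊕ Fin c ≃ Fin m := finSumFinEquiv.trans (finCongr hδc) with heIdx₁
  set bu : Basis (Fin n) ℂ (Fin n → ℂ) :=
    ((u₀.prod (ubar.map eX)).map (Submodule.prodEquivOfIsCompl U₀ U₁ hU₁)).reindex eIdx₀ with hbu
  set bv : Basis (Fin m) ℂ (Fin m → ℂ) :=
    ((v₀.prod (vbar.map eY)).map (Submodule.prodEquivOfIsCompl W₀ W₁ hW₁)).reindex eIdx₁ with hbv
  -- index value lemmas
  have hIdxL₀ : ∀ a : Fin w, ((eIdx₀ (Sum.inl a)) : ℕ) = (a : ℕ) := by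
    intro a; simp [heIdx₀]
  have hIdxR₀ : ∀ k : Fin c, ((eIdx₀ (Sum.inr k)) : ℕ) = w + (k : ℕ) := by
    intro k; simp [heIdx₀]
  have hIdxL₁ : ∀ a : Fin δ', ((eIdx₁ (Sum.inl a)) : ℕ) = (a : ℕ) := by
    intro a; simp [heIdx₁]
  have hIdxR₁ : ∀ k : Fin c, ((eIdx₁ (Sum.inr k)) : ℕ) = δ' + (k : ℕ) := by
    intro k; simp [heIdx₁]
  -- basis value lemmas
  have hbuL : ∀ a : Fin w, bu (eIdx₀ (Sum.inl a)) = ((u₀ a : Fin n → ℂ)) := by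
    intro a
    simp [hbu, Basis.reindex_apply, Basis.map_apply, Basis.prod_apply]
  have hbuR : ∀ k : Fin c, bu (eIdx₀ (Sum.inr k)) = ((eX (ubar k) : U₁) : Fin n → ℂ) := by
    intro k
    simp [hbu, Basis.reindex_apply, Basis.map_apply, Basis.prod_apply]
  have hbvL : ∀ a : Fin δ', bv (eIdx₁ (Sum.inl a)) = ((v₀ a : Fin m → ℂ)) := by
    intro a
    simp [hbv, Basis.reindex_apply, Basis.map_apply, Basis.prod_apply]
  have hbvR : ∀ k : Fin c, bv (eIdx₁ (Sum.inr k)) = ((eY (vbar k) : W₁) : Fin m → ℂ) := by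
    intro k
    simp [hbv, Basis.reindex_apply, Basis.map_apply, Basis.prod_apply]
  -- mkQ of lifted vectors
  have hmkX : ∀ k : Fin c, U₀.mkQ ((eX (ubar k) : U₁) : Fin n → ℂ) = ubar k := by
    intro k
    rw [Submodule.mkQ_apply]
    exact Submodule.mk_quotientEquivOfIsCompl_apply hU₁ (ubar k)
  have hmkY : ∀ k : Fin c, W₀.mkQ ((eY (vbar k) : W₁) : Fin m → ℂ) = vbar k := by
    intro k
    rw [Submodule.mkQ_apply]
    exact Submodule.mk_quotientEquivOfIsCompl_apply hW₁ (vbar k)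
  -- span facts
  have hU₀span : U₀ ≤ span ℂ (⇑bu '' {i : Fin n | (i : ℕ) < w}) := by
    conv_lhs => rw [← Submodule.map_subtype_top U₀, ← u₀.span_eq]
    rw [Submodule.map_span]
    apply Submodule.span_le.mpr
    rintro z ⟨x, ⟨a, rfl⟩, rfl⟩
    apply Submodule.subset_span
    refine ⟨eIdx₀ (Sum.inl a), ?_, hbuL a⟩
    simp only [Set.mem_setOf_eq, hIdxL₀]
    exact a.isLt
  have hW₀span : W₀ ≤ span ℂ (⇑bv '' {i : Fin m | (i : ℕ) < δ'}) := by
    conv_lhs => rw [← Submodule.map_subtype_top W₀, ← v₀.span_eq]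
    rw [Submodule.map_span]
    apply Submodule.span_le.mpr
    rintro z ⟨x, ⟨a, rfl⟩, rfl⟩
    apply Submodule.subset_span
    refine ⟨eIdx₁ (Sum.inl a), ?_, hbvL a⟩
    simp only [Set.mem_setOf_eq, hIdxL₁]
    exact a.isLt
  -- column facts for f
  have hcolF0 : ∀ j : Fin n, (j : ℕ) < w → F (bu j) = 0 := by
    intro j hj
    have hjeq : j = eIdx₀ (Sum.inl ⟨(j : ℕ), hj⟩) := Fin.ext (by rw [hIdxL₀])
    have hmem : bu j ∈ U₀ := by rw [hjeq, hbuL]; exact (u₀ _).2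
    simpa [LinearMap.mem_ker] using hU₀K hmem
  have hcolF1 : ∀ j : Fin n, w ≤ (j : ℕ) →
      F (bu j) ∈ span ℂ (⇑bv '' {i : Fin m | (i : ℕ) - δ' ≤ (j : ℕ) - w}) := by
    intro j hj
    have hjc : (j : ℕ) - w < c := by have := j.isLt; omega
    set k : Fin c := ⟨(j : ℕ) - w, hjc⟩ with hk
    have hjeq : j = eIdx₀ (Sum.inr k) := by
      apply Fin.ext
      rw [hIdxR₀]
      simp only [hk]
      omega
    have hbuj : bu j = ((eX (ubar k) : U₁) : Fin n → ℂ) := by rw [hjeq, hbuR]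
    have hmk : W₀.mkQ (F (bu j)) ∈ span ℂ (⇑vbar '' {i | i ≤ k}) := by
      have h2 : W₀.mkQ (F (bu j)) = (Submodule.mapQ U₀ W₀ F hFU) (U₀.mkQ (bu j)) := by
        rw [Submodule.mkQ_apply, Submodule.mkQ_apply, Submodule.mapQ_apply]
      rw [h2, hbuj, hmkX k]
      exact hubar k
    have himg : ⇑vbar '' {i | i ≤ k}
        = ⇑W₀.mkQ '' ((fun i : Fin c => ((eY (vbar i) : W₁) : Fin m → ℂ)) '' {i | i ≤ k}) := by
      rw [← Set.image_comp]
      apply Set.image_congr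
      intro i _
      exact (hmkY i).symm
    have hmem2 : F (bu j) ∈ Submodule.comap W₀.mkQ (Submodule.map W₀.mkQ (span ℂ
        ((fun i : Fin c => ((eY (vbar i) : W₁) : Fin m → ℂ)) '' {i | i ≤ k}))) := by
      rw [Submodule.mem_comap, Submodule.map_span, ← himg]
      exact hmk
    rw [Submodule.comap_map_mkQ] at hmem2
    refine (sup_le ?_ ?_ : _ ≤ span ℂ (⇑bv '' {i : Fin m | (i : ℕ) - δ' ≤ (j : ℕ) - w})) hmem2
    · refine le_trans hW₀span (Submodule.span_mono (Set.image_mono ?_))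
      intro i hi
      simp only [Set.mem_setOf_eq] at hi ⊢
      omega
    · apply Submodule.span_le.mpr
      rintro z ⟨i, hi, rfl⟩
      apply Submodule.subset_span
      refine ⟨eIdx₁ (Sum.inr i), ?_, hbvR i⟩
      simp only [Set.mem_setOf_eq] at hi ⊢
      rw [hIdxR₁]
      have hik : (i : ℕ) ≤ (k : ℕ) := hi
      simp only [hk] at hik
      omega
  -- column facts for g
  have hcolG0 : ∀ j : Fin m, (j : ℕ) < δ' → G (bv j) ∈ span ℂ (⇑bu '' {i : Fin n | (i : ℕ) < w}) := by
    intro j hj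
    have hjeq : j = eIdx₁ (Sum.inl ⟨(j : ℕ), hj⟩) := Fin.ext (by rw [hIdxL₁])
    have hmem : bv j ∈ W₀ := by rw [hjeq, hbvL]; exact (v₀ _).2
    exact hU₀span (hGU₀ (Submodule.mem_map_of_mem hmem))
  have hcolG1 : ∀ j : Fin m, δ' ≤ (j : ℕ) →
      G (bv j) ∈ span ℂ (⇑bu '' {i : Fin n | (i : ℕ) - w ≤ (j : ℕ) - δ'}) := by
    intro j hj
    have hjc : (j : ℕ) - δ' < c := by have := j.isLt; omega
    set k : Fin c := ⟨(j : ℕ) - δ', hjc⟩ with hk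
    have hjeq : j = eIdx₁ (Sum.inr k) := by
      apply Fin.ext
      rw [hIdxR₁]
      simp only [hk]
      omega
    have hbvj : bv j = ((eY (vbar k) : W₁) : Fin m → ℂ) := by rw [hjeq, hbvR]
    have hmk : U₀.mkQ (G (bv j)) ∈ span ℂ (⇑ubar '' {i | i ≤ k}) := by
      have h2 : U₀.mkQ (G (bv j)) = (Submodule.mapQ W₀ U₀ G hGW) (W₀.mkQ (bv j)) := by
        rw [Submodule.mkQ_apply, Submodule.mkQ_apply, Submodule.mapQ_apply]
      rw [h2, hbvj, hmkY k]
      exact hvbar k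
    have himg : ⇑ubar '' {i | i ≤ k}
        = ⇑U₀.mkQ '' ((fun i : Fin c => ((eX (ubar i) : U₁) : Fin n → ℂ)) '' {i | i ≤ k}) := by
      rw [← Set.image_comp]
      apply Set.image_congr
      intro i _
      exact (hmkX i).symm
    have hmem2 : G (bv j) ∈ Submodule.comap U₀.mkQ (Submodule.map U₀.mkQ (span ℂ
        ((fun i : Fin c => ((eX (ubar i) : U₁) : Fin n → ℂ)) '' {i | i ≤ k}))) := by
      rw [Submodule.mem_comap, Submodule.map_span, ← himg]
      exact hmk
    rw [Submodule.comap_map_mkQ] at hmem2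
    refine (sup_le ?_ ?_ : _ ≤ span ℂ (⇑bu '' {i : Fin n | (i : ℕ) - w ≤ (j : ℕ) - δ'})) hmem2
    · refine le_trans hU₀span (Submodule.span_mono (Set.image_mono ?_))
      intro i hi
      simp only [Set.mem_setOf_eq] at hi ⊢
      omega
    · apply Submodule.span_le.mpr
      rintro z ⟨i, hi, rfl⟩
      apply Submodule.subset_span
      refine ⟨eIdx₀ (Sum.inr i), ?_, hbuR i⟩
      simp only [Set.mem_setOf_eq] at hi ⊢
      rw [hIdxR₀]
      have hik : (i : ℕ) ≤ (k : ℕ) := hi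
      simp only [hk] at hik
      omega
  -- matrix entry formulas
  have hfmat : ∀ (i : Fin m) (j : Fin n),
      ((bv.toMatrix ⇑std₁) * f * (std₀.toMatrix ⇑bu)) i j = (bv.repr (F (bu j))) i := by
    intro i j
    have h1 : f = LinearMap.toMatrix std₀ std₁ F := (LinearMap.toMatrix_toLin std₀ std₁ f).symm
    rw [h1, basis_toMatrix_mul_linearMap_toMatrix_mul_basis_toMatrix, LinearMap.toMatrix_apply]
  have hgmat : ∀ (i : Fin n) (j : Fin m),
      ((bu.toMatrix ⇑std₀) * g * (std₁.toMatrix ⇑bv)) i j = (bu.repr (G (bv j))) i := by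
    intro i j
    have h1 : g = LinearMap.toMatrix std₁ std₀ G := (LinearMap.toMatrix_toLin std₁ std₀ g).symm
    rw [h1, basis_toMatrix_mul_linearMap_toMatrix_mul_basis_toMatrix, LinearMap.toMatrix_apply]
  refine ⟨⟨bu.toMatrix ⇑std₀, std₀.toMatrix ⇑bu,
      bu.toMatrix_mul_toMatrix_flip std₀, std₀.toMatrix_mul_toMatrix_flip bu⟩,
    ⟨bv.toMatrix ⇑std₁, std₁.toMatrix ⇑bv,
      bv.toMatrix_mul_toMatrix_flip std₁, std₁.toMatrix_mul_toMatrix_flip bv⟩,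
    ?_, ?_, ?_, ?_⟩
  · intro i j hj
    show ((bv.toMatrix ⇑std₁) * f * (std₀.toMatrix ⇑bu)) i j = 0
    rw [hfmat i j, hcolF0 j hj]
    simp
  · intro i j hδi hwj hlt
    show ((bv.toMatrix ⇑std₁) * f * (std₀.toMatrix ⇑bu)) i j = 0
    rw [hfmat i j]
    have hsupp := (Basis.mem_span_image bv).mp (hcolF1 j hwj)
    have hnotin : i ∉ {i : Fin m | (i : ℕ) - δ' ≤ (j : ℕ) - w} := by
      simp only [Set.mem_setOf_eq]
      have := i.isLt
      omega
    by_contra hne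
    exact hnotin (hsupp (Finsupp.mem_support_iff.mpr hne))
  · intro i j hwi hδj
    show ((bu.toMatrix ⇑std₀) * g * (std₁.toMatrix ⇑bv)) i j = 0
    rw [hgmat i j]
    have hjδ' : (j : ℕ) < δ' := by have := j.isLt; omega
    have hsupp := (Basis.mem_span_image bu).mp (hcolG0 j hjδ')
    have hnotin : i ∉ {i : Fin n | (i : ℕ) < w} := by
      simp only [Set.mem_setOf_eq]
      omega
    by_contra hne
    exact hnotin (hsupp (Finsupp.mem_support_iff.mpr hne))
  · intro i j hwi hδj hlt
    show ((bu.toMatrix ⇑std₀) * g * (std₁.toMatrix ⇑bv)) i j = 0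
    rw [hgmat i j]
    have hδ'j : δ' ≤ (j : ℕ) := by have := j.isLt; omega
    have hsupp := (Basis.mem_span_image bu).mp (hcolG1 j hδ'j)
    have hnotin : i ∉ {i : Fin n | (i : ℕ) - w ≤ (j : ℕ) - δ'} := by
      simp only [Set.mem_setOf_eq]
      have := j.isLt
      omega
    by_contra hne
    exact hnotin (hsupp (Finsupp.mem_support_iff.mpr hne))
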